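/- Let ν be a Borel probability measure on (0,∞), γ > 0, y > 0, a ∈ ℝ, b > 0, and D(t) = 1 + 2at + (a² + b²)t². If y = γ·∫ t/D(t) dν(t) and 1/(a² + b²) = γ·∫ t²/D(t) dν(t), then y² ≤ (γ − 1 − 2ay)/(a² + b²), and consequently (ay + 1)² + (by)² ≤ γ, i.e. (a + 1/y)² + b² ≤ γ/y². -/

import Mathlib

open MeasureTheory

/-- second feasible-set bound for the Silverstein system (via
Cauchy–Schwarz).  If `ν` is a Borel probability measure on `(0,∞)`, `γ > 0`, `y > 0`,
`b > 0`, `D(t) = 1 + 2at + (a² + b²)t²`, and `y = γ ∫ t/D dν`,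
`1/(a² + b²) = γ ∫ t²/D dν`, then `y² ≤ (γ - 1 - 2ay)/(a² + b²)`, hence
`(ay + 1)² + (by)² ≤ γ`, i.e. `(a + 1/y)² + b² ≤ γ/y²`. -/
theorem silverstein_feasible_disk
    (ν : Measure ℝ) [IsProbabilityMeasure ν] (hν : ν (Set.Ioi 0)ᶜ = 0)
    (γ y a b : ℝ) (hγ : 0 < γ) (hy : 0 < y) (hb : 0 < b)
    (h1 : y = γ * ∫ t, t / (1 + 2 * a * t + (a ^ 2 + b ^ 2) * t ^ 2) ∂ν)
    (h2 : 1 / (a ^ 2 + b ^ 2)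
        = γ * ∫ t, t ^ 2 / (1 + 2 * a * t + (a ^ 2 + b ^ 2) * t ^ 2) ∂ν) :
    y ^ 2 ≤ (γ - 1 - 2 * a * y) / (a ^ 2 + b ^ 2) ∧
    (a * y + 1) ^ 2 + (b * y) ^ 2 ≤ γ ∧
    (a + 1 / y) ^ 2 + b ^ 2 ≤ γ / y ^ 2 := by
  set A := a ^ 2 + b ^ 2 with hAdef
  have hA : 0 < A := by positivity
  set D : ℝ → ℝ := fun t => 1 + 2 * a * t + A * t ^ 2 with hDdef
  have hDt : ∀ t, D t = 1 + 2 * a * t + A * t ^ 2 := fun _ => rfl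
  have hb2 : (0:ℝ) < b ^ 2 := by positivity
  have hD : ∀ t, 0 < D t := by
    intro t
    have h : D t = (1 + a * t) ^ 2 + (b * t) ^ 2 := by rw [hDt, hAdef]; ring
    rcases eq_or_ne t 0 with ht | ht
    · subst ht; rw [hDt]; norm_num
    · have h2' : 0 < (b * t) ^ 2 := by positivity
      nlinarith [sq_nonneg (1 + a * t)]
  have hDlb1 : ∀ t, b ^ 2 ≤ D t * A := by
    intro t; rw [hDt]; nlinarith [sq_nonneg (A * t + a)]
  have hDlb2 : ∀ t, b ^ 2 * t ^ 2 ≤ D t := by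
    intro t; rw [hDt]; nlinarith [sq_nonneg (1 + a * t)]
  have hcD : Continuous D := by fun_prop
  have bound0 : ∀ t, |1 / D t| ≤ A / b ^ 2 := by
    intro t
    rw [abs_of_nonneg (div_nonneg zero_le_one (hD t).le),
      div_le_div_iff₀ (hD t) hb2, one_mul]
    nlinarith [hDlb1 t]
  have bound2 : ∀ t, |t ^ 2 / D t| ≤ 1 / b ^ 2 := by
    intro t
    rw [abs_of_nonneg (div_nonneg (sq_nonneg t) (hD t).le),
      div_le_div_iff₀ (hD t) hb2, one_mul]
    nlinarith [hDlb2 t]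
  have bound1 : ∀ t, |t / D t| ≤ (A + 1) / (2 * b ^ 2) := by
    intro t
    have h1' : |t / D t| = |t| / D t := by rw [abs_div, abs_of_pos (hD t)]
    rw [h1', div_le_div_iff₀ (hD t) (by positivity)]
    have habs : |t| ≤ (1 + t ^ 2) / 2 := by nlinarith [sq_nonneg (|t| - 1), sq_abs t]
    calc |t| * (2 * b ^ 2) = 2 * b ^ 2 * |t| := by ring
    _ ≤ b ^ 2 * (1 + t ^ 2) := by nlinarith
    _ = b ^ 2 + b ^ 2 * t ^ 2 := by ring
    _ ≤ D t * A + D t := by have := hDlb1 t; have := hDlb2 t; linarith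
    _ = (A + 1) * D t := by ring
  have hint : ∀ (f : ℝ → ℝ) (C : ℝ), Continuous f → (∀ t, |f t / D t| ≤ C) →
      Integrable (fun t => f t / D t) ν := by
    intro f C hf hC
    refine (integrable_const C).mono'
      ((hf.div hcD fun t => (hD t).ne').aestronglyMeasurable) ?_
    filter_upwards with t
    rw [Real.norm_eq_abs]; exact hC t
  have hI0 : Integrable (fun t => 1 / D t) ν := hint _ _ continuous_const bound0
  have hI1 : Integrable (fun t => t / D t) ν := hint _ _ continuous_id bound1
  have hI2 : Integrable (fun t => t ^ 2 / D t) ν := hint _ _ (continuous_pow 2) bound2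
  set I0 := ∫ t, 1 / D t ∂ν with hI0def
  set I1 := ∫ t, t / D t ∂ν with hI1def
  set I2 := ∫ t, t ^ 2 / D t ∂ν with hI2def
  -- Cauchy-Schwarz via a nonnegative quadratic
  have key : ∀ l : ℝ, 0 ≤ I0 + 2 * l * I1 + l ^ 2 * I2 := by
    intro l
    have heq : ∀ t, (1 + l * t) ^ 2 / D t
        = 1 / D t + 2 * l * (t / D t) + l ^ 2 * (t ^ 2 / D t) := by
      intro t
      have hne : D t ≠ 0 := (hD t).ne'
      field_simp
      ring
    have hnn : 0 ≤ ∫ t, (1 + l * t) ^ 2 / D t ∂ν :=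
      integral_nonneg fun t => div_nonneg (sq_nonneg _) (hD t).le
    calc (0:ℝ) ≤ ∫ t, (1 + l * t) ^ 2 / D t ∂ν := hnn
    _ = ∫ t, (1 / D t + 2 * l * (t / D t) + l ^ 2 * (t ^ 2 / D t)) ∂ν :=
        integral_congr_ae (Filter.Eventually.of_forall heq)
    _ = I0 + 2 * l * I1 + l ^ 2 * I2 := by
        have e3 : Integrable (fun t => 2 * l * (t / D t)) ν := hI1.const_mul _
        have e1 : Integrable (fun t => 1 / D t + 2 * l * (t / D t)) ν := hI0.add e3
        have e2 : Integrable (fun t => l ^ 2 * (t ^ 2 / D t)) ν := hI2.const_mul _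
        rw [integral_add e1 e2, integral_add hI0 e3, integral_const_mul,
          integral_const_mul]
  have hI2val : γ * I2 = 1 / A := h2.symm
  have hy1 : γ * I1 = y := h1.symm
  have hI2pos : 0 < I2 := by
    have hpos : 0 < γ * I2 := by rw [hI2val]; positivity
    rcases mul_pos_iff.mp hpos with ⟨_, h⟩ | ⟨h, _⟩
    · exact h
    · linarith
  have hcs : I1 ^ 2 ≤ I0 * I2 := by
    have hk := key (-(I1 / I2))
    have hI2ne : I2 ≠ 0 := hI2pos.ne'
    field_simp at hk
    rw [zero_mul] at hk
    nlinarith [hk, hI2pos, mul_pos hI2pos hI2pos]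
  have hAI2 : A * (γ * I2) = 1 := by rw [hI2val]; field_simp
  have hident : γ * I0 = γ - 1 - 2 * a * y := by
    have heq : ∀ t, 1 / D t = 1 - 2 * a * (t / D t) - A * (t ^ 2 / D t) := by
      intro t
      have hne : (1 + 2 * a * t + A * t ^ 2) ≠ 0 := (hD t).ne'
      rw [hDt]
      rw [eq_sub_iff_add_eq, eq_sub_iff_add_eq, mul_div_assoc', mul_div_assoc', ← add_div,
        ← add_div, div_eq_one_iff_eq hne]
      ring
    have hsum : I0 = 1 - 2 * a * I1 - A * I2 := by
      have e3 : Integrable (fun t => 2 * a * (t / D t)) ν := hI1.const_mul _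
      have e1 : Integrable (fun t => (1:ℝ) - 2 * a * (t / D t)) ν :=
        (integrable_const 1).sub e3
      have e2 : Integrable (fun t => A * (t ^ 2 / D t)) ν := hI2.const_mul _
      rw [hI0def, integral_congr_ae (Filter.Eventually.of_forall heq),
        integral_sub e1 e2, integral_sub (integrable_const 1) e3, integral_const_mul,
        integral_const_mul]
      simp
      rfl
    linear_combination γ * hsum - 2 * a * hy1 - hAI2
  have main : y ^ 2 ≤ (γ - 1 - 2 * a * y) / A := by
    have hyI : y ^ 2 = γ ^ 2 * I1 ^ 2 := by rw [h1]; ring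
    rw [hyI, ← hident, le_div_iff₀ hA]
    calc γ ^ 2 * I1 ^ 2 * A ≤ γ ^ 2 * (I0 * I2) * A :=
        mul_le_mul_of_nonneg_right (mul_le_mul_of_nonneg_left hcs (sq_nonneg γ)) hA.le
    _ = (γ * I0) * (A * (γ * I2)) := by ring
    _ = γ * I0 := by rw [hAI2, mul_one]
  have hdisk : (a * y + 1) ^ 2 + (b * y) ^ 2 ≤ γ := by
    have := (le_div_iff₀ hA).mp main
    rw [hAdef] at this
    nlinarith
  refine ⟨main, hdisk, ?_⟩
  have hrw : (a + 1 / y) ^ 2 + b ^ 2 = ((a * y + 1) ^ 2 + (b * y) ^ 2) / y ^ 2 := by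
    field_simp
  rw [hrw]
  gcongr
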